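/- Let H be a nonzero isolated subgroup of Γ. Then there exists a nonempty final (upper) subset J of T such that H = ⋃_{t ∈ J} H_t. -/

import Mathlib

/-- The carrier of Γ: functions `T → G` with well-ordered support. -/
def Gamma (T G : Type*) [LinearOrder T] [Zero G] [LT G] : Set (T → G) :=
  {f | (Function.support f).IsWF}

/-- The (left-to-right lexicographic) order on functions `T → G`:
`f ≤ g` iff `f = g` or `f` and `g` agree before some point `t` at which `f t < g t`. -/
def lexLE {T G : Type*} [LinearOrder T] [LT G] (f g : T → G) : Prop :=
  f = g ∨ ∃ t, (∀ s, s < t → f s = g s) ∧ f t < g t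

/-- `H` is an isolated subgroup of Γ: a subgroup of Γ that is convex for the
lexicographic order. -/
def IsIsolated (T G : Type*) [LinearOrder T] [AddCommGroup G] [LinearOrder G] [IsOrderedAddMonoid G]
    (H : Set (T → G)) : Prop :=
  H ⊆ Gamma T G ∧ (0 : T → G) ∈ H ∧ (∀ f ∈ H, ∀ g ∈ H, f + g ∈ H) ∧
  (∀ f ∈ H, -f ∈ H) ∧
  ∀ h ∈ H, ∀ g ∈ Gamma T G, lexLE 0 g → lexLE g h → g ∈ H

/-- The T-isolated subgroup `H_t`: elements of Γ vanishing strictly before `t`. -/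
def Ht (T G : Type*) [LinearOrder T] [Zero G] [LT G] (t : T) : Set (T → G) :=
  {f ∈ Gamma T G | ∀ s, s < t → f s = 0}

/-- The dual T-isolated subgroup `dH_t`: elements of Γ vanishing at and before `t`. -/
def dHt (T G : Type*) [LinearOrder T] [Zero G] [LT G] (t : T) : Set (T → G) :=
  {f ∈ Gamma T G | ∀ s, s ≤ t → f s = 0}

lemma nsmul_mem_of_isolated {T G : Type*} [LinearOrder T] [AddCommGroup G] [LinearOrder G] [IsOrderedAddMonoid G]
    {H : Set (T → G)} (hH : IsIsolated T G H) {f : T → G} (hf : f ∈ H) (n : ℕ) :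
    n • f ∈ H := by
  induction n with
  | zero => simpa using hH.2.1
  | succ n ih =>
      have := hH.2.2.1 _ ih _ hf
      simpa [succ_nsmul] using this

lemma key_isolated {T G : Type*} [LinearOrder T] [AddCommGroup G] [LinearOrder G] [IsOrderedAddMonoid G] [Archimedean G]
    {H : Set (T → G)} (hH : IsIsolated T G H) {f : T → G} (hf : f ∈ H)
    {t₀ : T} (hpos : 0 < f t₀) (hmin : ∀ s, s < t₀ → f s = 0) :
    Ht T G t₀ ⊆ H := by
  have inner : ∀ g, g ∈ Gamma T G → (∀ s, s < t₀ → g s = 0) → lexLE 0 g → g ∈ H := by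
    intro g hgΓ hg0 hglex
    obtain ⟨n, hn⟩ := Archimedean.arch (g t₀) hpos
    have hmemf : (n + 1) • f ∈ H := nsmul_mem_of_isolated hH hf (n + 1)
    refine hH.2.2.2.2 _ hmemf g hgΓ hglex ?_
    right
    refine ⟨t₀, fun s hs => ?_, ?_⟩
    · simp [hg0 s hs, hmin s hs]
    · have h1 : g t₀ < (n + 1) • f t₀ := by
        refine lt_of_le_of_lt hn ?_
        rw [succ_nsmul]
        exact lt_add_of_pos_right _ hpos
      simpa using h1
  intro g hg
  obtain ⟨hgΓ, hg0⟩ := hg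
  by_cases hgz : g = 0
  · subst hgz; exact hH.2.1
  · have hgWF : (Function.support g).IsWF := hgΓ
    have hsupp : (Function.support g).Nonempty := Function.support_nonempty_iff.2 hgz
    set s₀ := hgWF.min hsupp with hs₀
    have hmem : s₀ ∈ Function.support g := hgWF.min_mem hsupp
    have hzero : ∀ s, s < s₀ → g s = 0 := by
      intro s hs
      by_contra h
      exact absurd hs (not_lt_of_ge (hgWF.min_le hsupp h))
    rcases lt_or_gt_of_ne (Function.mem_support.1 hmem) with hlt | hgt
    · have hneg : -g ∈ H := by
        apply inner (-g)
        · show (Function.support (-g)).IsWF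
          simpa [Function.support_neg] using hgWF
        · intro s hs; simp [hg0 s hs]
        · right
          exact ⟨s₀, fun s hs => by simp [hzero s hs], by simpa using hlt⟩
      simpa using hH.2.2.2.1 _ hneg
    · exact inner g hgΓ hg0 (Or.inr ⟨s₀, fun s hs => (hzero s hs).symm, hgt⟩)

theorem stmt13 {T G : Type*} [LinearOrder T] [Nonempty T]
    [AddCommGroup G] [LinearOrder G] [IsOrderedAddMonoid G] [Archimedean G] [Nontrivial G]
    (H : Set (T → G)) (hH : IsIsolated T G H) (hne : H ≠ {0}) :
    ∃ J : Set T, J.Nonempty ∧ (∀ t ∈ J, ∀ s, t ≤ s → s ∈ J) ∧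
      H = ⋃ t ∈ J, Ht T G t := by
  -- For every nonzero h ∈ H, the minimum of its support gives a t with Ht t ⊆ H
  have main : ∀ h ∈ H, h ≠ 0 → ∃ t₀ : T, (∀ s, s < t₀ → h s = 0) ∧ Ht T G t₀ ⊆ H := by
    intro h hhH hhz
    have hhWF : (Function.support h).IsWF := hH.1 hhH
    have hsupp : (Function.support h).Nonempty := Function.support_nonempty_iff.2 hhz
    set t₀ := hhWF.min hsupp with ht₀
    have hmem : t₀ ∈ Function.support h := hhWF.min_mem hsupp
    have hzero : ∀ s, s < t₀ → h s = 0 := by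
      intro s hs
      by_contra hc
      exact absurd hs (not_lt_of_ge (hhWF.min_le hsupp hc))
    refine ⟨t₀, hzero, ?_⟩
    rcases lt_or_gt_of_ne (Function.mem_support.1 hmem) with hlt | hgt
    · exact key_isolated hH (hH.2.2.2.1 _ hhH) (by simpa using hlt)
        (fun s hs => by simp [hzero s hs])
    · exact key_isolated hH hhH hgt hzero
  obtain ⟨f, hfH, hfz⟩ : ∃ f ∈ H, f ≠ 0 := by
    by_contra hc
    push_neg at hc
    apply hne
    ext x
    simp only [Set.mem_singleton_iff]
    exact ⟨fun hx => hc x hx, fun hx => hx ▸ hH.2.1⟩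
  obtain ⟨t₀, ht₀z, ht₀⟩ := main f hfH hfz
  refine ⟨{t | Ht T G t ⊆ H}, ⟨t₀, ht₀⟩, ?_, ?_⟩
  · intro t ht s hts
    refine Set.Subset.trans ?_ ht
    intro x hx
    exact ⟨hx.1, fun u hu => hx.2 u (lt_of_lt_of_le hu hts)⟩
  · ext x
    simp only [Set.mem_iUnion]
    constructor
    · intro hxH
      by_cases hxz : x = 0
      · exact ⟨t₀, ht₀, by
          subst hxz
          refine ⟨?_, fun s _ => rfl⟩
          show (Function.support (0 : T → G)).IsWF
          simp⟩
      · obtain ⟨t₁, ht₁z, ht₁⟩ := main x hxH hxz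
        exact ⟨t₁, ht₁, hH.1 hxH, ht₁z⟩
    · rintro ⟨t, ht, hx⟩
      exact ht hx
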